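/- Sub-optimality of pure min-cut investment for a behavioral defender: let N < M, α ∈ (0,1), and fix positive investments x_1,…,x_n > 0 on min-cut edges of a path. Define f(ε) = k·(Nε/M)^α + ∑_{i=1}^n (x_i − ε)^α for some k ≥ 1. Then f'(ε) → +∞ as ε ↓ 0, and consequently there exists ε̄ > 0 such that f(ε) > f(0) for all ε ∈ (0, ε̄). -/

import Mathlib

open Filter Set Real Topology

/-- Sub-optimality of pure min-cut investment for a behavioral defender: with
`f(ε) = k (Nε/M)^α + ∑_i (x_i - ε)^α`, the derivative of `f` blows up as `ε ↓ 0`, and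
there is `ε̄ > 0` with `f(ε) > f(0)` for all `ε ∈ (0, ε̄)`. -/
theorem stmt16 (α : ℝ) (hα : α ∈ Set.Ioo (0:ℝ) 1)
    (N M : ℕ) (hN : 0 < N) (hNM : N < M)
    (k : ℝ) (hk : 1 ≤ k)
    (n : ℕ) (hn : 1 ≤ n) (x : Fin n → ℝ) (hx : ∀ i, 0 < x i) :
    ∀ f : ℝ → ℝ,
      (f = fun ε => k * ((N : ℝ) * ε / (M : ℝ)) ^ α + ∑ i, (x i - ε) ^ α) →
      (Filter.Tendsto (deriv f) (nhdsWithin 0 (Set.Ioi 0)) Filter.atTop ∧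
       ∃ εbar > (0:ℝ), ∀ ε ∈ Set.Ioo (0:ℝ) εbar, f ε > f 0) := by
  intro f hf
  obtain ⟨hα0, hα1⟩ := hα
  have hne : Nonempty (Fin n) := ⟨⟨0, hn⟩⟩
  have hneF : (Finset.univ : Finset (Fin n)).Nonempty := Finset.univ_nonempty
  set δ : ℝ := Finset.univ.inf' hneF x with hδdef
  have hδpos : 0 < δ := (Finset.lt_inf'_iff hneF).mpr fun i _ => hx i
  have hδle : ∀ i, δ ≤ x i := fun i => Finset.inf'_le _ (Finset.mem_univ i)
  have hNpos : (0:ℝ) < N := by exact_mod_cast hN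
  have hMpos : (0:ℝ) < M := by exact_mod_cast hN.trans hNM
  have hkpos : (0:ℝ) < k := lt_of_lt_of_le one_pos hk
  -- the derivative function
  set g : ℝ → ℝ := fun ε =>
    k * (((N:ℝ) * 1 / M) * α * ((N:ℝ) * ε / M) ^ (α - 1)) +
      ∑ i, (-1) * α * (x i - ε) ^ (α - 1) with hgdef
  -- f has derivative g on (0, δ)
  have hg : ∀ ε ∈ Ioo (0:ℝ) δ, HasDerivAt f (g ε) ε := by
    intro ε hε
    have hbase : (0:ℝ) < (N:ℝ) * ε / M := div_pos (mul_pos hNpos hε.1) hMpos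
    have h1 : HasDerivAt (fun ε : ℝ => (N:ℝ) * ε / M) ((N:ℝ) * 1 / M) ε :=
      ((hasDerivAt_id ε).const_mul (N:ℝ)).div_const M
    have h2 : HasDerivAt (fun ε : ℝ => k * ((N:ℝ) * ε / M) ^ α)
        (k * (((N:ℝ) * 1 / M) * α * ((N:ℝ) * ε / M) ^ (α - 1))) ε :=
      (h1.rpow_const (Or.inl hbase.ne')).const_mul k
    have h3 : HasDerivAt (fun ε : ℝ => ∑ i, (x i - ε) ^ α)
        (∑ i, (-1) * α * (x i - ε) ^ (α - 1)) ε := by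
      apply HasDerivAt.fun_sum
      intro i _
      have hxi : (0:ℝ) < x i - ε := by
        have := hδle i; have := hε.2; linarith
      have h4 : HasDerivAt (fun ε : ℝ => x i - ε) (-1) ε := by
        simpa using (hasDerivAt_id ε).const_sub (x i)
      exact h4.rpow_const (Or.inl hxi.ne')
    rw [hf]
    exact h2.add h3
  -- tendsto of g to atTop
  have hT : Tendsto g (𝓝[>] (0:ℝ)) atTop := by
    -- the rpow part blows up
    have hpow : Tendsto (fun t : ℝ => t ^ (α - 1)) (𝓝[>] (0:ℝ)) atTop := by
      have hA : Tendsto (fun t : ℝ => t ^ (1 - α)) (𝓝[>] (0:ℝ)) (𝓝[>] (0:ℝ)) := by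
        rw [tendsto_nhdsWithin_iff]
        constructor
        · have hc : ContinuousAt (fun t : ℝ => t ^ (1 - α)) 0 :=
            Real.continuousAt_rpow_const 0 (1 - α) (Or.inr (by linarith))
          have h0 : (0:ℝ) ^ (1 - α) = 0 := Real.zero_rpow (by norm_num; linarith)
          simpa [h0] using hc.continuousWithinAt.tendsto
        · filter_upwards [self_mem_nhdsWithin] with t ht
          exact Real.rpow_pos_of_pos ht (1 - α)
      have hinv := tendsto_inv_nhdsGT_zero.comp hA
      apply hinv.congr'
      filter_upwards [self_mem_nhdsWithin] with t ht
      have : t ^ (-(1 - α)) = (t ^ (1 - α))⁻¹ := Real.rpow_neg (le_of_lt ht) (1 - α)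
      simp only [Function.comp_apply]
      rw [← this]; norm_num
    have hu : Tendsto (fun ε : ℝ => (N:ℝ) * ε / M) (𝓝[>] (0:ℝ)) (𝓝[>] (0:ℝ)) := by
      rw [tendsto_nhdsWithin_iff]
      constructor
      · have hcont2 : Continuous (fun ε : ℝ => (N:ℝ) * ε / M) :=
          (continuous_const.mul continuous_id).div_const (M:ℝ)
        have h6 := hcont2.tendsto 0
        simp only [mul_zero, zero_div] at h6
        exact h6.mono_left nhdsWithin_le_nhds
      · filter_upwards [self_mem_nhdsWithin] with t ht
        exact div_pos (mul_pos hNpos ht) hMpos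
    have hT1 : Tendsto (fun ε : ℝ => ((N:ℝ) * ε / M) ^ (α - 1)) (𝓝[>] (0:ℝ)) atTop :=
      hpow.comp hu
    have hc : (0:ℝ) < k * (((N:ℝ) * 1 / M) * α) := by positivity
    have hT2 : Tendsto (fun ε : ℝ =>
        k * (((N:ℝ) * 1 / M) * α * ((N:ℝ) * ε / M) ^ (α - 1))) (𝓝[>] (0:ℝ)) atTop := by
      have := (tendsto_const_mul_atTop_of_pos hc).mpr hT1
      apply this.congr
      intro ε; ring
    have hS : Tendsto (fun ε : ℝ => ∑ i, (-1) * α * (x i - ε) ^ (α - 1)) (𝓝[>] (0:ℝ))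
        (𝓝 (∑ i, (-1) * α * (x i - 0) ^ (α - 1))) := by
      apply Tendsto.mono_left _ nhdsWithin_le_nhds
      apply tendsto_finset_sum
      intro i _
      apply (ContinuousAt.tendsto ?_)
      have hxi : x i - 0 ≠ 0 := by have := hx i; simp; linarith
      exact continuousAt_const.mul
        (((Real.continuousAt_rpow_const _ _ (Or.inl hxi)).comp
          (continuous_const.sub continuous_id).continuousAt))
    exact hT2.atTop_add hS
  constructor
  · -- deriv f agrees with g near 0⁺
    apply hT.congr'
    filter_upwards [Ioo_mem_nhdsGT hδpos] with ε hε
    exact ((hg ε hε).deriv).symm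
  · -- eventually g ≥ 1, then MVT
    have hev : ∀ᶠ ε in 𝓝[>] (0:ℝ), 1 ≤ g ε := hT.eventually (eventually_ge_atTop 1)
    obtain ⟨u, hu0, huI⟩ := mem_nhdsGT_iff_exists_Ioo_subset.mp hev
    refine ⟨min u δ, lt_min hu0 hδpos, ?_⟩
    intro ε hε
    obtain ⟨hε0, hεlt⟩ := hε
    have hεu : ε < u := lt_of_lt_of_le hεlt (min_le_left _ _)
    have hεδ : ε < δ := lt_of_lt_of_le hεlt (min_le_right _ _)
    -- continuity of f on [0, ε]
    have hcont : ContinuousOn f (Icc 0 ε) := by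
      rw [hf]
      apply ContinuousOn.add
      · apply Continuous.continuousOn
        exact continuous_const.mul ((Real.continuous_rpow_const (le_of_lt hα0)).comp
          ((continuous_const.mul continuous_id).div_const (M:ℝ)))
      · apply continuousOn_finset_sum
        intro i _
        intro t ht
        have hxi : x i - t ≠ 0 := by
          have := hδle i; have := ht.2; simp at *; linarith
        exact ((Real.continuousAt_rpow_const _ _ (Or.inl hxi)).comp
          ((continuous_const.sub continuous_id).continuousAt)).continuousWithinAt
    obtain ⟨c, hc, hslope⟩ := exists_hasDerivAt_eq_slope f g hε0 hcont
      (fun t ht => hg t ⟨ht.1, ht.2.trans hεδ⟩)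
    have hgc : 1 ≤ g c := huI ⟨hc.1, hc.2.trans hεu⟩
    have : (f ε - f 0) / (ε - 0) = g c := hslope.symm
    have h5 : f ε - f 0 = g c * ε := by
      field_simp at this
      linarith [this]
    nlinarith [h5, hgc, hε0]
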